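/- Write E_{G,P,B}(s) to make the dependence of the expected average reward on the cost parameters explicit. Let (G,P,B) and (G',P',B') be two parameter triples with G ≤ G', P ≤ P' and B ≥ B'. If s is the unique maximizer of E_{G,P,B} over {1,...,M+1} and s' is the unique maximizer of E_{G',P',B'} over {1,...,M+1}, then s ≤ s'. In other words, the optimal threshold is nondecreasing with respect to G and P and nonincreasing with respect to B. -/

import Mathlib

open Finset

/-- Expected average reward `E(s)` of the threshold-`s` policy, for `1 ≤ s ≤ M`;
`E(M+1) = 0` corresponds to the always-inactive policy. -/
noncomputable def Ereward (M : ℕ) (p G P B : ℝ) (U : ℕ → ℝ) (s : ℕ) : ℝ :=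
  if s = M + 1 then 0
  else ((s : ℝ) + (1 - p) / p)⁻¹ *
    ((∑ x ∈ Finset.Icc 1 (s - 1), U x)
      + (∑ i ∈ Finset.range (M - s), U (s + i) * (1 - p) ^ i)
      - G / p - P + B)

/-- Monotonicity of the optimal threshold in the cost parameters: if `G ≤ G'`,
`P ≤ P'` and `B ≥ B'`, and `s`, `s'` are the unique maximizers of `E_{G,P,B}` and
`E_{G',P',B'}` over `{1,...,M+1}` respectively, then `s ≤ s'`. -/
theorem optimal_threshold_monotone (M s s' : ℕ) (p G P B G' P' B' : ℝ) (U : ℕ → ℝ)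
    (hM : 2 ≤ M) (hp : 0 < p) (hp1 : p < 1)
    (hU : ∀ ⦃x y : ℕ⦄, 1 ≤ x → x ≤ y → y ≤ M → U y ≤ U x)
    (hUM : U M = 0)
    (hG : G ≤ G') (hP : P ≤ P') (hB : B' ≤ B)
    (hmem : s ∈ Finset.Icc 1 (M + 1))
    (hmax : ∀ t ∈ Finset.Icc 1 (M + 1), t ≠ s →
      Ereward M p G P B U t < Ereward M p G P B U s)
    (hmem' : s' ∈ Finset.Icc 1 (M + 1))
    (hmax' : ∀ t ∈ Finset.Icc 1 (M + 1), t ≠ s' →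
      Ereward M p G' P' B' U t < Ereward M p G' P' B' U s') :
    s ≤ s' := by
  by_contra hcon
  push_neg at hcon
  have h1 := hmax s' hmem' (by omega)
  have h2 := hmax' s hmem (by omega)
  simp only [Finset.mem_Icc] at hmem hmem'
  have hq : (0:ℝ) < (1 - p) / p := div_pos (by linarith) hp
  have hK : G / p ≤ G' / p := (div_le_div_iff_of_pos_right hp).mpr hG
  have hs' : s' ≠ M + 1 := by omega
  have hc' : (0:ℝ) < ((s' : ℝ) + (1 - p) / p) := by positivity
  set A' : ℝ := (∑ x ∈ Finset.Icc 1 (s' - 1), U x)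
      + (∑ i ∈ Finset.range (M - s'), U (s' + i) * (1 - p) ^ i) with hA'
  by_cases hs : s = M + 1
  · rw [Ereward, Ereward, if_pos hs, if_neg hs'] at h1
    rw [Ereward, Ereward, if_pos hs, if_neg hs'] at h2
    have hinv : (0:ℝ) < ((s' : ℝ) + (1 - p) / p)⁻¹ := inv_pos.mpr hc'
    have key : ((s' : ℝ) + (1 - p) / p)⁻¹ * (A' - G' / p - P' + B')
        ≤ ((s' : ℝ) + (1 - p) / p)⁻¹ * (A' - G / p - P + B) := by
      apply mul_le_mul_of_nonneg_left _ hinv.le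
      linarith
    linarith
  · rw [Ereward, Ereward, if_neg hs, if_neg hs'] at h1
    rw [Ereward, Ereward, if_neg hs, if_neg hs'] at h2
    set A : ℝ := (∑ x ∈ Finset.Icc 1 (s - 1), U x)
        + (∑ i ∈ Finset.range (M - s), U (s + i) * (1 - p) ^ i) with hA
    have hlt : ((s' : ℝ) + (1 - p) / p) < ((s : ℝ) + (1 - p) / p) := by
      have : (s' : ℝ) < (s : ℝ) := by exact_mod_cast hcon
      linarith
    have hinv : ((s : ℝ) + (1 - p) / p)⁻¹ < ((s' : ℝ) + (1 - p) / p)⁻¹ :=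
      inv_strictAnti₀ hc' hlt
    have hinvpos : (0:ℝ) < ((s : ℝ) + (1 - p) / p)⁻¹ := inv_pos.mpr (by linarith)
    set u : ℝ := ((s' : ℝ) + (1 - p) / p)⁻¹
    set v : ℝ := ((s : ℝ) + (1 - p) / p)⁻¹
    have hKK : (0:ℝ) ≤ (-(G/p) - P + B) - (-(G'/p) - P' + B') := by linarith
    have hprod : 0 ≤ (u - v) * ((-(G/p) - P + B) - (-(G'/p) - P' + B')) :=
      mul_nonneg (by linarith) hKK
    nlinarith [h1, h2, hprod]
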